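/- In any induced subgraph of a layer L_r(n) of the hypercube, every copy of C₆⁻ (a 6-cycle minus one edge, i.e., a path with 5 edges whose endpoints differ in one coordinate) extends to a copy of C₆; hence an induced subgraph of L_r(n) with no 6-cycle contains no C₆⁻. -/

import Mathlib

/-- The layer graph L_r(n): the bipartite graph on subsets of [n] with edges given
by inclusion between sets of size r-1 and sets of size r. -/
def layerGraph (n r : ℕ) : SimpleGraph (Finset (Fin n)) where
  Adj x y := (x ⊂ y ∧ y.card = r ∧ x.card + 1 = r) ∨ (y ⊂ x ∧ x.card = r ∧ y.card + 1 = r)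
  symm := ⟨by intro x y h; tauto⟩
  loopless := ⟨by intro x h; simp only [ssubset_irrefl, false_and, or_self] at h⟩

/-- In a path of length > 1 from u to v, the edge s(u,v) does not occur. -/
lemma path_edge_not_mem {V : Type*} {G : SimpleGraph V} {u v : V}
    (p : G.Walk u v) (hp : p.IsPath) (hl : 1 < p.length) : s(u, v) ∉ p.edges := by
  cases p with
  | nil => simp
  | cons h q =>
    rename_i w
    intro hmem
    simp only [SimpleGraph.Walk.edges_cons, List.mem_cons] at hmem
    rcases hmem with heq | hmem
    · rw [Sym2.eq_iff] at heq
      rcases heq with ⟨-, hv⟩ | ⟨hw, hv⟩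
      · subst hv
        have hq : q = SimpleGraph.Walk.nil := congrArg Subtype.val (SimpleGraph.Path.loop_eq ⟨q, hp.of_cons⟩)
        subst hq
        simp at hl
      · subst hw; subst hv; exact G.loopless.irrefl _ h
    · have : u ∈ q.support := SimpleGraph.Walk.fst_mem_support_of_mem_edges q hmem
      have h2 := hp.support_nodup
      simp only [SimpleGraph.Walk.support_cons, List.nodup_cons] at h2
      exact h2.1 this

/-- In any induced subgraph G of a layer L_r(n), every copy of C₆⁻ (a path with 5
edges whose endpoints differ in one coordinate, i.e. are adjacent in the layer)
extends to a 6-cycle of G; hence if G has no 6-cycle it has no copy of C₆⁻. -/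
theorem stmt17 (n r : ℕ) (hrn : r ≤ n) (A : Set (Finset (Fin n))) :
    (∀ (u v : ↥A) (p : ((layerGraph n r).induce A).Walk u v),
        p.IsPath → p.length = 5 → (layerGraph n r).Adj ↑u ↑v →
        ∃ c : ((layerGraph n r).induce A).Walk u u,
          c.IsCycle ∧ c.length = 6 ∧ ∀ w ∈ p.support, w ∈ c.support) ∧
    ((¬ ∃ (w : ↥A) (c : ((layerGraph n r).induce A).Walk w w),
          c.IsCycle ∧ c.length = 6) →
      ¬ ∃ (u v : ↥A) (p : ((layerGraph n r).induce A).Walk u v),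
          p.IsPath ∧ p.length = 5 ∧ (layerGraph n r).Adj ↑u ↑v) := by
  have main : ∀ (u v : ↥A) (p : ((layerGraph n r).induce A).Walk u v),
        p.IsPath → p.length = 5 → (layerGraph n r).Adj ↑u ↑v →
        ∃ c : ((layerGraph n r).induce A).Walk u u,
          c.IsCycle ∧ c.length = 6 ∧ ∀ w ∈ p.support, w ∈ c.support := by
    intro u v p hp hl hadj
    have hadj' : ((layerGraph n r).induce A).Adj u v := hadj
    refine ⟨SimpleGraph.Walk.cons hadj' p.reverse, ?_, ?_, ?_⟩
    · rw [SimpleGraph.Walk.cons_isCycle_iff]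
      refine ⟨hp.reverse, ?_⟩
      rw [SimpleGraph.Walk.edges_reverse, List.mem_reverse]
      exact path_edge_not_mem p hp (by omega)
    · simp [hl]
    · intro w hw
      simp only [SimpleGraph.Walk.support_cons, SimpleGraph.Walk.support_reverse,
        List.mem_cons, List.mem_reverse]
      right; exact hw
  refine ⟨main, ?_⟩
  rintro hno ⟨u, v, p, hp, hl, hadj⟩
  obtain ⟨c, hc, hcl, -⟩ := main u v p hp hl hadj
  exact hno ⟨u, c, hc, hcl⟩
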